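/- For every t ∈ ℂ with t ∉ {0, μ³, 1/μ}: ψ(λ(t)) = (t − μ³)/(μ(μt − 1)) + μ(μt − 1)/(t − μ³), and consequently ψ(λ(μ²/t)) = ψ(λ(t)); that is, the map t ↦ ψ(λ(t)) is invariant under the substitution t ↦ μ²/t. -/

import Mathlib

open Complex Set Filter MeasureTheory

/-- `μ = (R - √(R²-4))/2`. -/
noncomputable def mu (R : ℝ) : ℝ := (R - Real.sqrt (R ^ 2 - 4)) / 2

/-- The Möbius transformation `λ(z) = (z - μ)/(μz - 1)`. -/
noncomputable def lam (R : ℝ) (z : ℂ) : ℂ := (z - (mu R : ℂ)) / ((mu R : ℂ) * z - 1)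

/-- The shifted Zhukovsky-type map `ψ(w) = Rw - 1 + 1/(Rw - 1)`. -/
noncomputable def psi (R : ℝ) (w : ℂ) : ℂ := (R : ℂ) * w - 1 + ((R : ℂ) * w - 1)⁻¹

/-- `χ(t) = t ∑_{k ∈ ℤ} μ^{4k} exp((μ - 1/μ) μ^{4k} t)`. -/
noncomputable def chi (R : ℝ) (t : ℂ) : ℂ :=
  t * ∑' k : ℤ, (mu R : ℂ) ^ (4 * k) *
    Complex.exp (((mu R : ℂ) - (mu R : ℂ)⁻¹) * (mu R : ℂ) ^ (4 * k) * t)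

/-- The region `D = {t : |t - 1/R| < 1/R, Re t > Rμ²/2}`. -/
def Dset (R : ℝ) : Set ℂ :=
  {t | ‖t - 1 / (R : ℂ)‖ < 1 / R ∧ R * (mu R) ^ 2 / 2 < t.re}

/-- The region `𝔇 = {w : |w - R/(R²-1)| > 1/(R²-1), |w| < 1}`. -/
def frakD (R : ℝ) : Set ℂ :=
  {w | 1 / (R ^ 2 - 1) < ‖w - (R : ℂ) / (((R : ℝ) ^ 2 - 1 : ℝ) : ℂ)‖ ∧
    ‖w‖ < 1}

/-- The orthogonality domain `G₁ = ψ(𝔇)`. -/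
noncomputable def G1 (R : ℝ) : Set ℂ := psi R '' frakD R

/-- `p` is the sequence of Carleman (Bergman) orthonormal polynomials of `G₁`:
`p n` has degree `n`, real positive leading coefficient, and
`(1/π) ∫_{G₁} pₙ conj(pₘ) dA = δ_{n,m}`. -/
def IsCarleman (R : ℝ) (p : ℕ → Polynomial ℂ) : Prop :=
  (∀ n, (p n).natDegree = n) ∧
  (∀ n, 0 < (p n).leadingCoeff.re ∧ (p n).leadingCoeff.im = 0) ∧
  (∀ n m, ∫ z in G1 R, (p n).eval z * (starRingEnd ℂ) ((p m).eval z) =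
      if n = m then (Real.pi : ℂ) else 0)

/-- The limit functions `f_q` of Theorem 1.1. -/
noncomputable def fq (R q : ℝ) (t : ℂ) : ℂ :=
  (1 - (mu R : ℂ) * t) ^ 2 * (1 - (mu R : ℂ) ^ 3 / t) ^ 2 / ((1 - (mu R : ℂ) ^ 4) * R) *
    ((chi R ((((mu R) ^ (4 * q) : ℝ) : ℂ) * t) -
        chi R ((((mu R) ^ (4 * q + 2) : ℝ) : ℂ) / t)) /
      (t - (mu R : ℂ) ^ 2 / t))

/-- `Gₙ(t) = μ^{-n} λ(t)ⁿ λ'(t)`. -/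
noncomputable def Gfun (R : ℝ) (n : ℕ) (t : ℂ) : ℂ :=
  ((mu R : ℂ) ^ n)⁻¹ * (lam R t) ^ n * deriv (lam R) t

/-- `ψ(λ(t)) = (t - μ³)/(μ(μt - 1)) + μ(μt - 1)/(t - μ³)`, hence `ψ∘λ` is invariant
under `t ↦ μ²/t`. -/
lemma stmt8_key (R : ℝ) (hR : 2 < R) :
    ((mu R : ℂ)) ^ 2 - (R : ℂ) * (mu R : ℂ) + 1 = 0 := by
  have hs : Real.sqrt (R ^ 2 - 4) ^ 2 = R ^ 2 - 4 := Real.sq_sqrt (by nlinarith)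
  have hr : (mu R) ^ 2 - R * mu R + 1 = 0 := by
    simp only [mu]; nlinarith [hs]
  have := congrArg (fun x : ℝ => (x : ℂ)) hr
  push_cast at this
  simpa using this

lemma stmt8_aux (R : ℝ) (hR : 2 < R) (t : ℂ) (ht0 : t ≠ 0)
    (ht3 : t ≠ (mu R : ℂ) ^ 3) (htinv : t ≠ ((mu R : ℂ))⁻¹) :
    psi R (lam R t) =
      (t - (mu R : ℂ) ^ 3) / ((mu R : ℂ) * ((mu R : ℂ) * t - 1)) +
        (mu R : ℂ) * ((mu R : ℂ) * t - 1) / (t - (mu R : ℂ) ^ 3) := by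
  set m : ℂ := (mu R : ℂ) with hm
  have key : m ^ 2 - (R : ℂ) * m + 1 = 0 := stmt8_key R hR
  have hm0 : m ≠ 0 := by
    intro h; rw [h] at key; simp at key
  have hd1 : m * t - 1 ≠ 0 := by
    intro h
    apply htinv
    field_simp
    linear_combination h
  have hd2 : t - m ^ 3 ≠ 0 := sub_ne_zero.mpr ht3
  have hA : (R : ℂ) * lam R t - 1 = (t - m ^ 3) / (m * (m * t - 1)) := by
    rw [lam, ← hm]
    rw [mul_div_assoc', div_sub_one hd1, div_eq_div_iff hd1 (mul_ne_zero hm0 hd1)]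
    linear_combination (t + t * m ^ 2 - t ^ 2 * m - m) * key
  rw [psi, hA, inv_div]

theorem stmt_8 (R : ℝ) (hR : 2 < R) :
    ∀ t : ℂ, t ≠ 0 → t ≠ (mu R : ℂ) ^ 3 → t ≠ ((mu R : ℂ))⁻¹ →
      psi R (lam R t) =
          (t - (mu R : ℂ) ^ 3) / ((mu R : ℂ) * ((mu R : ℂ) * t - 1)) +
            (mu R : ℂ) * ((mu R : ℂ) * t - 1) / (t - (mu R : ℂ) ^ 3) ∧
        psi R (lam R ((mu R : ℂ) ^ 2 / t)) = psi R (lam R t) := by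
  intro t ht0 ht3 htinv
  set m : ℂ := (mu R : ℂ) with hm
  have key : m ^ 2 - (R : ℂ) * m + 1 = 0 := stmt8_key R hR
  have hm0 : m ≠ 0 := by intro h; rw [h] at key; simp at key
  have hd1 : m * t - 1 ≠ 0 := by
    intro h; apply htinv; field_simp; linear_combination h
  have hd2 : t - m ^ 3 ≠ 0 := sub_ne_zero.mpr ht3
  refine ⟨stmt8_aux R hR t ht0 ht3 htinv, ?_⟩
  have hs0 : m ^ 2 / t ≠ 0 := div_ne_zero (pow_ne_zero 2 hm0) ht0
  have hs3 : m ^ 2 / t ≠ m ^ 3 := by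
    intro h
    rw [div_eq_iff ht0] at h
    have h2 : m ^ 2 * (m * t - 1) = 0 := by linear_combination -h
    rcases mul_eq_zero.mp h2 with h3 | h3
    · exact pow_ne_zero 2 hm0 h3
    · exact hd1 h3
  have hsinv : m ^ 2 / t ≠ m⁻¹ := by
    intro h
    apply hd2
    rw [div_eq_iff ht0] at h
    have h2 : m * m ^ 2 = m * (m⁻¹ * t) := by rw [h]
    rw [← mul_assoc, mul_inv_cancel₀ hm0, one_mul] at h2
    linear_combination -h2
  have hd3 : m * (m ^ 2 / t) - 1 ≠ 0 := by
    intro h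
    apply ht3
    have h2 : t * (m * (m ^ 2 / t) - 1) = m ^ 3 - t := by
      field_simp
    rw [h, mul_zero] at h2
    linear_combination h2
  have hd4 : m ^ 2 / t - m ^ 3 ≠ 0 := sub_ne_zero.mpr hs3
  rw [stmt8_aux R hR _ hs0 hs3 hsinv, stmt8_aux R hR t ht0 ht3 htinv]
  have E1 : (m ^ 2 / t - m ^ 3) / (m * (m * (m ^ 2 / t) - 1)) =
      m * (m * t - 1) / (t - m ^ 3) := by
    rw [div_eq_div_iff (mul_ne_zero hm0 hd3) hd2]
    field_simp
    ring
  have E2 : m * (m * (m ^ 2 / t) - 1) / (m ^ 2 / t - m ^ 3) =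
      (t - m ^ 3) / (m * (m * t - 1)) := by
    rw [div_eq_div_iff hd4 (mul_ne_zero hm0 hd1)]
    field_simp
    ring
  rw [E1, E2, add_comm]
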